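/- (Claim 1: SO1 implies SO2.) Suppose the condition SO1 holds for the probability measure μ. Then the condition SO2 also holds: for all events A, B and all regions 𝒜 ⊇ dom(A), ℬ ⊇ dom(B) with 𝒜 ♮ ℬ, μ(A ∩ B | C) = μ(A | C) μ(B | C) for every full specification C of the joint past 𝒫₂ = (J⁻(𝒜) ∪ J⁻(ℬ)) \ (𝒜 ∪ ℬ) with μ(C) > 0. -/

import Mathlib

open Set MeasureTheory

/-- A least-domain-of-decidability function `dom : Σ → 𝒫(𝕊)`, with its four
defining properties (i)–(iv).  Events are the measurable subsets of `Ω`. -/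
structure DomSystem (Ω S : Type*) [MeasurableSpace Ω] where
  dom : Set Ω → Set S
  /-- (i): for a countable family of events whose domains are pairwise disjoint,
  the domain of the intersection is the (disjoint) union of the domains. -/
  prop_i : ∀ Λ : Set (Set Ω), Λ.Countable → (∀ X ∈ Λ, MeasurableSet X) →
    (∀ X ∈ Λ, ∀ Y ∈ Λ, X ≠ Y → Disjoint (dom X) (dom Y)) →
    dom (⋂₀ Λ) = ⋃ X ∈ Λ, dom X
  /-- (ii): for a countable family of events all having the same domain `D`,
  the domain of the intersection is contained in `D`. -/
  prop_ii : ∀ (Λ : Set (Set Ω)) (D : Set S), Λ.Countable →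
    (∀ X ∈ Λ, MeasurableSet X) → (∀ X ∈ Λ, dom X = D) → dom (⋂₀ Λ) ⊆ D
  /-- (iii): complementation preserves the domain. -/
  prop_iii : ∀ X : Set Ω, MeasurableSet X → dom Xᶜ = dom X
  /-- (iv): an event whose domain is a disjoint union `𝒳 ⊔ 𝒴` lies in the σ-algebra
  generated by `Γ(𝒳) ∪ Γ(𝒴)`, where `Γ(𝒳) = {X ∈ Σ : dom X ⊆ 𝒳}`. -/
  prop_iv : ∀ Z : Set Ω, MeasurableSet Z → ∀ 𝒳 𝒴 : Set S, Disjoint 𝒳 𝒴 →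
    dom Z = 𝒳 ∪ 𝒴 →
    MeasurableSet[MeasurableSpace.generateFrom
      ({X : Set Ω | MeasurableSet X ∧ dom X ⊆ 𝒳} ∪
        {X : Set Ω | MeasurableSet X ∧ dom X ⊆ 𝒴})] Z

/-- A full specification of a region `R ⊆ 𝕊`: a nonempty event `F` with `dom F ⊆ R`
that decides every event decidable within `R`. -/
def IsFullSpec {Ω S : Type*} [MeasurableSpace Ω] (dom : Set Ω → Set S)
    (R : Set S) (F : Set Ω) : Prop :=
  MeasurableSet F ∧ F.Nonempty ∧ dom F ⊆ R ∧
    ∀ X : Set Ω, MeasurableSet X → dom X ⊆ R → F ⊆ X ∨ F ⊆ Xᶜ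

/-- The restriction `Γ_R(A)` of an event `A` to a region `R`: the intersection of all
events `Z` with `A ⊆ Z` and `dom Z ⊆ R`. -/
def restr {Ω S : Type*} [MeasurableSpace Ω] (dom : Set Ω → Set S)
    (R : Set S) (A : Set Ω) : Set Ω :=
  ⋂₀ {Z : Set Ω | MeasurableSet Z ∧ A ⊆ Z ∧ dom Z ⊆ R}

/-- The causal past `J⁻(𝒳)` of a region in the causal structure `𝕊`. -/
def causalPast {S : Type*} [PartialOrder S] (𝒳 : Set S) : Set S :=
  {s | ∃ x ∈ 𝒳, s ≤ x}

/-- Two regions are spacelike, `𝒳 ♮ 𝒴`, if `J⁻(𝒳) ∩ 𝒴 = ∅` and `J⁻(𝒴) ∩ 𝒳 = ∅`. -/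
def Spacelike {S : Type*} [PartialOrder S] (𝒳 𝒴 : Set S) : Prop :=
  causalPast 𝒳 ∩ 𝒴 = ∅ ∧ causalPast 𝒴 ∩ 𝒳 = ∅

/-- Screening off, SO1: for all events `A`, `B` occurring in spacelike regions `𝒜 ♮ ℬ`,
`μ(A ∩ B | C) = μ(A | C)·μ(B | C)` for every full specification `C` of the mutual past
`𝒫₁ = J⁻(𝒜) ∩ J⁻(ℬ)` with `μ C > 0`. -/
def SO1 {Ω S : Type*} [MeasurableSpace Ω] [PartialOrder S]
    (dom : Set Ω → Set S) (μ : MeasureTheory.Measure Ω) : Prop :=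
  ∀ A B : Set Ω, MeasurableSet A → MeasurableSet B →
    ∀ 𝒜 ℬ : Set S, dom A ⊆ 𝒜 → dom B ⊆ ℬ → Spacelike 𝒜 ℬ →
      ∀ C : Set Ω, IsFullSpec dom (causalPast 𝒜 ∩ causalPast ℬ) C → 0 < μ C →
        μ ((A ∩ B) ∩ C) / μ C = (μ (A ∩ C) / μ C) * (μ (B ∩ C) / μ C)

/-- Screening off, SO2: as SO1, but conditioning on full specifications of the joint
past `𝒫₂ = (J⁻(𝒜) ∪ J⁻(ℬ)) \ (𝒜 ∪ ℬ)`. -/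
def SO2 {Ω S : Type*} [MeasurableSpace Ω] [PartialOrder S]
    (dom : Set Ω → Set S) (μ : MeasureTheory.Measure Ω) : Prop :=
  ∀ A B : Set Ω, MeasurableSet A → MeasurableSet B →
    ∀ 𝒜 ℬ : Set S, dom A ⊆ 𝒜 → dom B ⊆ ℬ → Spacelike 𝒜 ℬ →
      ∀ C : Set Ω,
        IsFullSpec dom ((causalPast 𝒜 ∪ causalPast ℬ) \ (𝒜 ∪ ℬ)) C → 0 < μ C →
          μ ((A ∩ B) ∩ C) / μ C = (μ (A ∩ C) / μ C) * (μ (B ∩ C) / μ C)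

namespace Claim1Aux

variable {Ω S : Type*} [MeasurableSpace Ω]

lemma subset_restr (dom : Set Ω → Set S) (R : Set S) (A : Set Ω) : A ⊆ restr dom R A :=
  fun _ hx => Set.mem_sInter.2 fun _ hZ => hZ.2.1 hx

lemma restr_subset (dom : Set Ω → Set S) {R : Set S} {A Z : Set Ω} (hZ : MeasurableSet Z)
    (hAZ : A ⊆ Z) (hdZ : dom Z ⊆ R) : restr dom R A ⊆ Z :=
  Set.sInter_subset_of_mem ⟨hZ, hAZ, hdZ⟩

lemma decide_generate {D : Set Ω} {G : Set (Set Ω)}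
    (hG : ∀ Z ∈ G, D ⊆ Z ∨ D ⊆ Zᶜ) {Z : Set Ω}
    (hZ : MeasurableSet[MeasurableSpace.generateFrom G] Z) : D ⊆ Z ∨ D ⊆ Zᶜ := by
  induction hZ with
  | basic Z hZ => exact hG Z hZ
  | empty => exact Or.inr (by simp)
  | compl W h ih => rcases ih with h'|h'
                    · exact Or.inr (by simpa using h')
                    · exact Or.inl (by simpa using h')
  | iUnion f hf ih =>
    by_cases h : ∃ n, D ⊆ f n
    · obtain ⟨n, hn⟩ := h; exact Or.inl (hn.trans (Set.subset_iUnion f n))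
    · push_neg at h
      refine Or.inr ?_
      rw [Set.compl_iUnion]
      refine Set.subset_iInter fun n => ?_
      rcases ih n with h'|h'
      · exact absurd h' (h n)
      · exact h'

/-- C full spec of R decides every event in a subregion, through its restriction. -/
lemma pred_restr (D : DomSystem Ω S) {R 𝒳 : Set S} {C : Set Ω}
    (hC : IsFullSpec D.dom R C) (h𝒳R : 𝒳 ⊆ R) {Z : Set Ω}
    (hZm : MeasurableSet Z) (hZd : D.dom Z ⊆ 𝒳) :
    restr D.dom 𝒳 C ⊆ Z ∨ restr D.dom 𝒳 C ⊆ Zᶜ := by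
  rcases hC.2.2.2 Z hZm (hZd.trans h𝒳R) with h|h
  · exact Or.inl (restr_subset D.dom hZm h hZd)
  · exact Or.inr (restr_subset D.dom hZm.compl h (by rw [D.prop_iii Z hZm]; exact hZd))

lemma isFullSpec_restr (D : DomSystem Ω S)
    (hres : ∀ A : Set Ω, MeasurableSet A → ∀ R : Set S,
      MeasurableSet (restr D.dom R A) ∧ D.dom (restr D.dom R A) ⊆ R)
    {R R' : Set S} {C : Set Ω} (hC : IsFullSpec D.dom R C) (hR' : R' ⊆ R) :
    IsFullSpec D.dom R' (restr D.dom R' C) :=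
  ⟨(hres C hC.1 R').1, hC.2.1.mono (subset_restr D.dom R' C), (hres C hC.1 R').2,
    fun _ hXm hXd => pred_restr D hC hR' hXm hXd⟩

lemma pred_union (D : DomSystem Ω S) {𝒳 𝒴 : Set S} (hdisj : Disjoint 𝒳 𝒴) {E : Set Ω}
    (hX : ∀ Z, MeasurableSet Z → D.dom Z ⊆ 𝒳 → E ⊆ Z ∨ E ⊆ Zᶜ)
    (hY : ∀ Z, MeasurableSet Z → D.dom Z ⊆ 𝒴 → E ⊆ Z ∨ E ⊆ Zᶜ) :
    ∀ Z, MeasurableSet Z → D.dom Z ⊆ 𝒳 ∪ 𝒴 → E ⊆ Z ∨ E ⊆ Zᶜ := by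
  intro Z hZm hZd
  have hd' : Disjoint (D.dom Z ∩ 𝒳) (D.dom Z ∩ 𝒴) :=
    hdisj.mono Set.inter_subset_right Set.inter_subset_right
  have heq : D.dom Z = (D.dom Z ∩ 𝒳) ∪ (D.dom Z ∩ 𝒴) := by
    rw [← Set.inter_union_distrib_left, Set.inter_eq_left.mpr hZd]
  refine decide_generate ?_ (D.prop_iv Z hZm _ _ hd' heq)
  rintro W (⟨hWm, hWd⟩|⟨hWm, hWd⟩)
  · exact hX W hWm (hWd.trans Set.inter_subset_right)
  · exact hY W hWm (hWd.trans Set.inter_subset_right)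

lemma dom_inter (D : DomSystem Ω S) {A B : Set Ω} (hA : MeasurableSet A)
    (hB : MeasurableSet B) (hd : Disjoint (D.dom A) (D.dom B)) :
    D.dom (A ∩ B) ⊆ D.dom A ∪ D.dom B := by
  by_cases h : A = B
  · subst h; rw [Set.inter_self]; exact Set.subset_union_left
  · have key := D.prop_i {A, B} ((Set.countable_singleton B).insert A)
      (by rintro X (rfl|rfl) <;> assumption)
      (by rintro X (rfl|rfl) Y (rfl|rfl) hne
          · exact absurd rfl hne
          · exact hd
          · exact hd.symm
          · exact absurd rfl hne)
    rw [Set.sInter_pair] at key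
    rw [key, Set.biUnion_pair]

/-- The factorization of a full specification of a region decomposed into
three pairwise disjoint pieces. -/
lemma fullSpec_factor (D : DomSystem Ω S)
    (hres : ∀ A : Set Ω, MeasurableSet A → ∀ R : Set S,
      MeasurableSet (restr D.dom R A) ∧ D.dom (restr D.dom R A) ⊆ R)
    {𝒳 𝒴 𝒵 : Set S} (hxy : Disjoint 𝒳 𝒴) (hxz : Disjoint 𝒳 𝒵) (hyz : Disjoint 𝒴 𝒵)
    {C : Set Ω} (hC : IsFullSpec D.dom (𝒳 ∪ 𝒴 ∪ 𝒵) C) :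
    C = restr D.dom 𝒳 C ∩ restr D.dom 𝒴 C ∩ restr D.dom 𝒵 C := by
  set E := restr D.dom 𝒳 C ∩ restr D.dom 𝒴 C ∩ restr D.dom 𝒵 C with hE
  have hCE : C ⊆ E :=
    Set.subset_inter (Set.subset_inter (subset_restr _ _ _) (subset_restr _ _ _))
      (subset_restr _ _ _)
  have hEX : E ⊆ restr D.dom 𝒳 C := fun x hx => hx.1.1
  have hEY : E ⊆ restr D.dom 𝒴 C := fun x hx => hx.1.2
  have hEZ : E ⊆ restr D.dom 𝒵 C := fun x hx => hx.2
  have hX : ∀ Z, MeasurableSet Z → D.dom Z ⊆ 𝒳 → E ⊆ Z ∨ E ⊆ Zᶜ := fun Z hZm hZd => by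
    rcases pred_restr D hC (Set.subset_union_left.trans Set.subset_union_left) hZm hZd with h|h
    · exact Or.inl (hEX.trans h)
    · exact Or.inr (hEX.trans h)
  have hY : ∀ Z, MeasurableSet Z → D.dom Z ⊆ 𝒴 → E ⊆ Z ∨ E ⊆ Zᶜ := fun Z hZm hZd => by
    rcases pred_restr D hC (Set.subset_union_right.trans Set.subset_union_left) hZm hZd with h|h
    · exact Or.inl (hEY.trans h)
    · exact Or.inr (hEY.trans h)
  have hZ : ∀ Z, MeasurableSet Z → D.dom Z ⊆ 𝒵 → E ⊆ Z ∨ E ⊆ Zᶜ := fun Z hZm hZd => by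
    rcases pred_restr D hC Set.subset_union_right hZm hZd with h|h
    · exact Or.inl (hEZ.trans h)
    · exact Or.inr (hEZ.trans h)
  have hXY := pred_union D hxy hX hY
  have hXYZ := pred_union D (Set.disjoint_union_left.mpr ⟨hxz, hyz⟩) hXY hZ
  rcases hXYZ C hC.1 hC.2.2.1 with h|h
  · exact Set.Subset.antisymm hCE h
  · obtain ⟨x, hx⟩ := hC.2.1
    exact absurd (hCE hx) fun hxE => h hxE hx

end Claim1Aux

/-- Claim 1: SO1 implies SO2, assuming every region has only finitely many full
specifications, singletons are events, and restrictions of events are events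
decidable in the restricting region. -/
theorem stmt8 {Ω S : Type*} [MeasurableSpace Ω] [PartialOrder S]
    (D : DomSystem Ω S) (μ : Measure Ω) [IsProbabilityMeasure μ]
    (hfin : ∀ R : Set S, {F : Set Ω | IsFullSpec D.dom R F}.Finite)
    (hsing : ∀ ω : Ω, MeasurableSet ({ω} : Set Ω))
    (hres : ∀ A : Set Ω, MeasurableSet A → ∀ R : Set S,
      MeasurableSet (restr D.dom R A) ∧ D.dom (restr D.dom R A) ⊆ R)
    (h1 : SO1 D.dom μ) : SO2 D.dom μ := by
  classical
  intro A B hA hB 𝒜 ℬ hdA hdB hsp C hC hpos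
  obtain ⟨hsp1, hsp2⟩ := hsp
  have hs1 : ∀ s, s ∈ causalPast 𝒜 → s ∉ ℬ := fun s h h' =>
    Set.eq_empty_iff_forall_notMem.mp hsp1 s ⟨h, h'⟩
  have hs2 : ∀ s, s ∈ causalPast ℬ → s ∉ 𝒜 := fun s h h' =>
    Set.eq_empty_iff_forall_notMem.mp hsp2 s ⟨h, h'⟩
  set 𝒳 : Set S := causalPast 𝒜 \ (𝒜 ∪ causalPast ℬ) with h𝒳
  set 𝒴 : Set S := causalPast ℬ \ (ℬ ∪ causalPast 𝒜) with h𝒴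
  set 𝒵 : Set S := causalPast 𝒜 ∩ causalPast ℬ with h𝒵
  have hR : 𝒳 ∪ 𝒴 ∪ 𝒵 = (causalPast 𝒜 ∪ causalPast ℬ) \ (𝒜 ∪ ℬ) := by
    ext s
    have := hs1 s; have := hs2 s
    have h𝒜cp : s ∈ 𝒜 → s ∈ causalPast 𝒜 := fun h => ⟨s, h, le_refl s⟩
    have hℬcp : s ∈ ℬ → s ∈ causalPast ℬ := fun h => ⟨s, h, le_refl s⟩
    simp only [h𝒳, h𝒴, h𝒵, Set.mem_union, Set.mem_diff, Set.mem_inter_iff]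
    tauto
  have hxy : Disjoint 𝒳 𝒴 := Set.disjoint_left.mpr fun s hs hs' => hs.2 (Or.inr hs'.1)
  have hxz : Disjoint 𝒳 𝒵 := Set.disjoint_left.mpr fun s hs hs' => hs.2 (Or.inr hs'.2)
  have hyz : Disjoint 𝒴 𝒵 := Set.disjoint_left.mpr fun s hs hs' => hs.2 (Or.inr hs'.1)
  have hax : Disjoint 𝒜 𝒳 := Set.disjoint_left.mpr fun s hs hs' => hs'.2 (Or.inl hs)
  have hby : Disjoint ℬ 𝒴 := Set.disjoint_left.mpr fun s hs hs' => hs'.2 (Or.inl hs)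
  have hC' : IsFullSpec D.dom (𝒳 ∪ 𝒴 ∪ 𝒵) C := by rw [hR]; exact hC
  set CX := restr D.dom 𝒳 C with hCX
  set CY := restr D.dom 𝒴 C with hCY
  set CZ := restr D.dom 𝒵 C with hCZdef
  have hfac : C = CX ∩ CY ∩ CZ := Claim1Aux.fullSpec_factor D hres hxy hxz hyz hC'
  have hCXm : MeasurableSet CX := (hres C hC.1 𝒳).1
  have hCYm : MeasurableSet CY := (hres C hC.1 𝒴).1
  have hCZm : MeasurableSet CZ := (hres C hC.1 𝒵).1
  have hdCX : D.dom CX ⊆ 𝒳 := (hres C hC.1 𝒳).2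
  have hdCY : D.dom CY ⊆ 𝒴 := (hres C hC.1 𝒴).2
  have hCZfs : IsFullSpec D.dom 𝒵 CZ :=
    Claim1Aux.isFullSpec_restr D hres hC' Set.subset_union_right
  have hCsubX : C ⊆ CX := Claim1Aux.subset_restr D.dom 𝒳 C
  have hCsubY : C ⊆ CY := Claim1Aux.subset_restr D.dom 𝒴 C
  have hCsubZ : C ⊆ CZ := Claim1Aux.subset_restr D.dom 𝒵 C
  have hposZ : 0 < μ CZ := lt_of_lt_of_le hpos (measure_mono hCsubZ)
  -- enlarged regions
  have hdA' : D.dom (A ∩ CX) ⊆ 𝒜 ∪ 𝒳 :=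
    (Claim1Aux.dom_inter D hA hCXm (hax.mono hdA hdCX)).trans
      (Set.union_subset_union hdA hdCX)
  have hdB' : D.dom (B ∩ CY) ⊆ ℬ ∪ 𝒴 :=
    (Claim1Aux.dom_inter D hB hCYm (hby.mono hdB hdCY)).trans
      (Set.union_subset_union hdB hdCY)
  have hcpA : causalPast (𝒜 ∪ 𝒳) = causalPast 𝒜 := by
    apply Set.Subset.antisymm
    · rintro s ⟨x, hx | hx, hsx⟩
      · exact ⟨x, hx, hsx⟩
      · obtain ⟨a, ha, hxa⟩ := hx.1
        exact ⟨a, ha, hsx.trans hxa⟩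
    · rintro s ⟨a, ha, hsa⟩
      exact ⟨a, Or.inl ha, hsa⟩
  have hcpB : causalPast (ℬ ∪ 𝒴) = causalPast ℬ := by
    apply Set.Subset.antisymm
    · rintro s ⟨x, hx | hx, hsx⟩
      · exact ⟨x, hx, hsx⟩
      · obtain ⟨a, ha, hxa⟩ := hx.1
        exact ⟨a, ha, hsx.trans hxa⟩
    · rintro s ⟨a, ha, hsa⟩
      exact ⟨a, Or.inl ha, hsa⟩
  have hsp' : Spacelike (𝒜 ∪ 𝒳) (ℬ ∪ 𝒴) := by
    constructor
    · rw [hcpA, Set.eq_empty_iff_forall_notMem]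
      rintro s ⟨hpa, hb | hy⟩
      · exact hs1 s hpa hb
      · exact hy.2 (Or.inr hpa)
    · rw [hcpB, Set.eq_empty_iff_forall_notMem]
      rintro s ⟨hpb, ha | hx⟩
      · exact hs2 s hpb ha
      · exact hx.2 (Or.inr hpb)
  have hZeq : causalPast (𝒜 ∪ 𝒳) ∩ causalPast (ℬ ∪ 𝒴) = 𝒵 := by rw [hcpA, hcpB]
  have hCZfs' : IsFullSpec D.dom (causalPast (𝒜 ∪ 𝒳) ∩ causalPast (ℬ ∪ 𝒴)) CZ := by
    rw [hZeq]; exact hCZfs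
  -- the four SO1 instances
  have hq1 := h1 (A ∩ CX) (B ∩ CY) (hA.inter hCXm) (hB.inter hCYm) (𝒜 ∪ 𝒳) (ℬ ∪ 𝒴)
    hdA' hdB' hsp' CZ hCZfs' hposZ
  have hq2 := h1 (A ∩ CX) CY (hA.inter hCXm) hCYm (𝒜 ∪ 𝒳) (ℬ ∪ 𝒴)
    hdA' (hdCY.trans Set.subset_union_right) hsp' CZ hCZfs' hposZ
  have hq3 := h1 CX (B ∩ CY) hCXm (hB.inter hCYm) (𝒜 ∪ 𝒳) (ℬ ∪ 𝒴)
    (hdCX.trans Set.subset_union_right) hdB' hsp' CZ hCZfs' hposZ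
  have hq4 := h1 CX CY hCXm hCYm (𝒜 ∪ 𝒳) (ℬ ∪ 𝒴)
    (hdCX.trans Set.subset_union_right) (hdCY.trans Set.subset_union_right) hsp' CZ hCZfs' hposZ
  -- set identities
  have s1 : ((A ∩ CX) ∩ (B ∩ CY)) ∩ CZ = (A ∩ B) ∩ C := by
    rw [hfac]; ext x; simp only [Set.mem_inter_iff]; tauto
  have s2 : ((A ∩ CX) ∩ CY) ∩ CZ = A ∩ C := by
    rw [hfac]; ext x; simp only [Set.mem_inter_iff]; tauto
  have s3 : (CX ∩ (B ∩ CY)) ∩ CZ = B ∩ C := by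
    rw [hfac]; ext x; simp only [Set.mem_inter_iff]; tauto
  have s4 : (CX ∩ CY) ∩ CZ = C := hfac.symm
  rw [s1] at hq1
  rw [s2] at hq2
  rw [s3] at hq3
  rw [s4] at hq4
  -- pass to real numbers
  have toR : ∀ {x y z w : ENNReal}, x / y = z / y * (w / y) →
      x.toReal / y.toReal = z.toReal / y.toReal * (w.toReal / y.toReal) := by
    intro x y z w h
    have := congrArg ENNReal.toReal h
    simpa [ENNReal.toReal_div, ENNReal.toReal_mul] using this
  have E1 := toR hq1
  have E2 := toR hq2
  have E3 := toR hq3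
  have E4 := toR hq4
  have hPz : 0 < (μ CZ).toReal := ENNReal.toReal_pos hposZ.ne' (measure_ne_top μ _)
  have hPc : 0 < (μ C).toReal := ENNReal.toReal_pos hpos.ne' (measure_ne_top μ _)
  have hQx : 0 < (μ (CX ∩ CZ)).toReal :=
    ENNReal.toReal_pos (lt_of_lt_of_le hpos (measure_mono
      (Set.subset_inter hCsubX hCsubZ))).ne' (measure_ne_top μ _)
  have hQy : 0 < (μ (CY ∩ CZ)).toReal :=
    ENNReal.toReal_pos (lt_of_lt_of_le hpos (measure_mono
      (Set.subset_inter hCsubY hCsubZ))).ne' (measure_ne_top μ _)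
  refine (ENNReal.toReal_eq_toReal_iff' ((ENNReal.div_lt_top (measure_ne_top μ _) hpos.ne').ne)
    (ENNReal.mul_ne_top ((ENNReal.div_lt_top (measure_ne_top μ _) hpos.ne').ne)
      ((ENNReal.div_lt_top (measure_ne_top μ _) hpos.ne').ne))).mp ?_
  simp only [ENNReal.toReal_div, ENNReal.toReal_mul]
  set Pab := (μ ((A ∩ B) ∩ C)).toReal
  set Pa := (μ (A ∩ C)).toReal
  set Pb := (μ (B ∩ C)).toReal
  set Pc := (μ C).toReal
  set Pz := (μ CZ).toReal
  set Qa := (μ ((A ∩ CX) ∩ CZ)).toReal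
  set Qb := (μ ((B ∩ CY) ∩ CZ)).toReal
  set Qx := (μ (CX ∩ CZ)).toReal
  set Qy := (μ (CY ∩ CZ)).toReal
  have e1 : Pab * Pz = Qa * Qb := by
    field_simp at E1
    exact mul_right_cancel₀ hPz.ne' (by linear_combination Pz * E1)
  have e2 : Pa * Pz = Qa * Qy := by
    field_simp at E2
    exact mul_right_cancel₀ hPz.ne' (by linear_combination Pz * E2)
  have e3 : Pb * Pz = Qx * Qb := by
    field_simp at E3
    exact mul_right_cancel₀ hPz.ne' (by linear_combination Pz * E3)
  have e4 : Pc * Pz = Qx * Qy := by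
    field_simp at E4
    exact mul_right_cancel₀ hPz.ne' (by linear_combination Pz * E4)
  have key2 : Pab * Pc * (Pz * Pz) = Pa * Pb * (Pz * Pz) := by
    linear_combination (Pc * Pz) * e1 + Qa * Qb * e4 - Pb * Pz * e2 - Qa * Qy * e3
  have key : Pab * Pc = Pa * Pb := mul_right_cancel₀ (by positivity) key2
  rw [div_mul_div_comm, div_eq_div_iff hPc.ne' (by positivity)]
  linear_combination Pc * key
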